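/- Let A be an n×n real matrix with zero diagonal such that A i j · A j i < 0 whenever A i j ≠ 0 (A i j ≠ 0 iff A j i ≠ 0). Let L be a set of vertex-disjoint directed cycles of the digraph of A that contains at least one cycle of odd length ≥ 3, and let L′ be obtained from L by reversing one such odd cycle C, assuming additionally that the cycle weights of C and its reverse have equal absolute value and the reverse arcs exist. If moreover ω(C) = ω(C*) would hold for the underlying positive weights, then the contributions ω_A(L) and ω_A(L′) to the determinant expansion satisfy ω_A(L) = −ω_A(L′). -/
import Mathlib


open Matrix

/- Statement 19: let A be the adjacency matrix of a skew-signing (zero diagonal and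
A i j * A j i < 0 whenever A i j ≠ 0). Let L be a linear subdigraph containing an odd
cycle C of length k ≥ 3 given by distinct vertices v, both C and its reverse being present
in the digraph of A, with the forward and reverse cycle weights of equal absolute value
(cycle-symmetry of the underlying positive weights). If W is the weight of the remaining
cycles of L, then the weight of L is minus the weight of L′, the linear subdigraph
obtained by reversing C. -/
theorem stmt_19 (n : ℕ) (A : Matrix (Fin n) (Fin n) ℝ)
    (hdiag : ∀ i, A i i = 0)
    (hskewsign : ∀ i j : Fin n, A i j ≠ 0 → A i j * A j i < 0)
    (k : ℕ) (hk : 3 ≤ k) (hodd : Odd k) (v : Fin k → Fin n)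
    (hinj : Function.Injective v)
    (harcs : ∀ j : Fin k, A (v j) (v (finRotate k j)) ≠ 0)
    (harcs' : ∀ j : Fin k, A (v (finRotate k j)) (v j) ≠ 0)
    (habs : |∏ j : Fin k, A (v j) (v (finRotate k j))| =
      |∏ j : Fin k, A (v (finRotate k j)) (v j)|)
    (W : ℝ) :
    W * (∏ j : Fin k, A (v j) (v (finRotate k j))) =
      -(W * ∏ j : Fin k, A (v (finRotate k j)) (v j)) := by
  set P := ∏ j : Fin k, A (v j) (v (finRotate k j)) with hP
  set Q := ∏ j : Fin k, A (v (finRotate k j)) (v j) with hQ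
  have hPQ : P * Q < 0 := by
    rw [hP, hQ, ← Finset.prod_mul_distrib]
    have : ∏ j : Fin k, A (v j) (v (finRotate k j)) * A (v (finRotate k j)) (v j)
        = (-1 : ℝ) ^ k * ∏ j : Fin k, |A (v j) (v (finRotate k j)) * A (v (finRotate k j)) (v j)| := by
      have : ∀ j : Fin k, A (v j) (v (finRotate k j)) * A (v (finRotate k j)) (v j)
          = (-1 : ℝ) * |A (v j) (v (finRotate k j)) * A (v (finRotate k j)) (v j)| := fun j => by
        have h := hskewsign (v j) (v (finRotate k j)) (harcs j)
        rw [abs_of_neg h]; ring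
      rw [Finset.prod_congr rfl (fun j _ => this j), Finset.prod_mul_distrib,
        Finset.prod_const]
      simp
    rw [this, hodd.neg_one_pow]
    have hpos : 0 < ∏ j : Fin k, |A (v j) (v (finRotate k j)) * A (v (finRotate k j)) (v j)| :=
      Finset.prod_pos fun j _ => abs_pos.mpr (ne_of_lt (hskewsign (v j) (v (finRotate k j)) (harcs j)))
    nlinarith
  have hPQ' : P = -Q := by
    rcases lt_trichotomy P 0 with h | h | h
    · have hQpos : 0 < Q := by nlinarith
      rw [abs_of_neg h, abs_of_pos hQpos] at habs
      linarith
    · simp [h] at hPQ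
    · have hQneg : Q < 0 := by nlinarith
      rw [abs_of_pos h, abs_of_neg hQneg] at habs
      linarith
  rw [hPQ']; ring
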